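/- There exist constants c₁ > 0, c₂ > 0, ε₀ > 0 such that for every field K and every ε ∈ (0, ε₀), there is an n₀ (which may depend on ε) so that for all n ≥ n₀ there exists a 2^n × 2^n matrix M' over K with rank(M') ≤ 5n·2^{n − c₁·ε²·n} such that, in every row, M' differs from the Walsh–Hadamard matrix H_n (over K) in at most 2^{c₂·ε·log₂(1/ε)·n} entries. -/

import Mathlib

open scoped Classical
open Finset

noncomputable section

def ip {n : ℕ} (x y : Fin n → Bool) : ℕ :=
  (Finset.univ.filter (fun i => x i ∧ y i)).card

def wt {n : ℕ} (x : Fin n → Bool) : ℕ :=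
  (Finset.univ.filter (fun i => x i)).card

def Had (K : Type) [Field K] (n : ℕ) : Matrix (Fin n → Bool) (Fin n → Bool) K :=
  Matrix.of fun x y => (-1 : K) ^ ip x y

def diffCount {n : ℕ} {K : Type} [Field K]
    (A B : Matrix (Fin n → Bool) (Fin n → Bool) K) : ℕ :=
  Nat.card {p : (Fin n → Bool) × (Fin n → Bool) // A p.1 p.2 ≠ B p.1 p.2}

def ProbRankLE {n : ℕ} {K : Type} [Field K]
    (A : Matrix (Fin n → Bool) (Fin n → Bool) K) (ε r : ℝ) : Prop :=
  ∃ (s : Finset (Matrix (Fin n → Bool) (Fin n → Bool) K))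
    (w : Matrix (Fin n → Bool) (Fin n → Bool) K → ℝ),
    (∀ M ∈ s, 0 ≤ w M) ∧ (∑ M ∈ s, w M) = 1 ∧
    (∀ M ∈ s, ((M.rank : ℝ)) ≤ r) ∧
    ∀ x y : Fin n → Bool, 1 - ε ≤ ∑ M ∈ s, (if M x y = A x y then w M else 0)

namespace HadAux

/-! ### Rank lemmas -/

variable {K : Type} [Field K] {m : Type} [Fintype m]

lemma rank_add_le' (A B : Matrix m m K) :
    (A + B).rank ≤ A.rank + B.rank := by
  classical
  rw [Matrix.rank, Matrix.rank, Matrix.rank, Matrix.mulVecLin_add]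
  have h : LinearMap.range (A.mulVecLin + B.mulVecLin) ≤
      LinearMap.range A.mulVecLin ⊔ LinearMap.range B.mulVecLin := by
    rintro _ ⟨v, rfl⟩
    exact Submodule.mem_sup.2 ⟨_, ⟨v, rfl⟩, _, ⟨v, rfl⟩, rfl⟩
  exact (Submodule.finrank_mono h).trans
    (Submodule.finrank_add_le_finrank_add_finrank _ _)

lemma rank_outer (u v : m → K) :
    (Matrix.of fun x y => u x * v y).rank ≤ 1 := by
  classical
  have h : (Matrix.of fun x y => u x * v y) = Matrix.vecMulVec u v := rfl
  rw [h, Matrix.vecMulVec_eq (Fin 1)]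
  exact (Matrix.rank_mul_le_left _ _).trans
    ((Matrix.rank_le_card_width _).trans (by simp))

lemma rank_sum_outer {ι : Type} (s : Finset ι) (u v : ι → m → K) :
    (Matrix.of fun x y => ∑ i ∈ s, u i x * v i y).rank ≤ s.card := by
  classical
  induction s using Finset.cons_induction with
  | empty => simp [show (Matrix.of fun (x y : m) => (0:K)) = 0 from rfl]
  | cons a s ha ih =>
    have h : (Matrix.of fun x y => ∑ i ∈ Finset.cons a s ha, u i x * v i y)
        = (Matrix.of fun x y => u a x * v a y) +
          (Matrix.of fun x y => ∑ i ∈ s, u i x * v i y) := by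
      ext x y
      simp [Finset.sum_insert ha]
    rw [h, Finset.card_cons]
    calc _ ≤ _ := rank_add_le' _ _
      _ ≤ 1 + s.card := add_le_add (rank_outer _ _) ih
      _ = s.card + 1 := by omega

/-! ### Newton interpolation over ℤ -/

lemma sum_range_choose_eq (i m : ℕ) : ∑ t ∈ range m, t.choose i = m.choose (i+1) := by
  induction m with
  | zero => simp
  | succ m ih =>
    rw [Finset.sum_range_succ, ih, Nat.choose_succ_succ' m i]
    omega

lemma newton (D : ℕ) : ∀ (a : ℕ) (f : ℕ → ℤ), ∃ c : ℕ → ℤ,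
    ∀ k, a ≤ k → k ≤ a + D → f k = ∑ i ∈ range (D+1), c i * (k.choose i) := by
  induction D with
  | zero =>
    intro a f
    refine ⟨fun _ => f a, fun k h1 h2 => ?_⟩
    have hk : k = a := by omega
    subst hk; simp
  | succ D ih =>
    intro a f
    obtain ⟨c', hc'⟩ := ih a (fun t => f (t+1) - f t)
    refine ⟨fun i => if i = 0 then
        (f a - ∑ j ∈ range (D+1), c' j * (a.choose (j+1))) else c' (i-1), fun k h1 h2 => ?_⟩
    rw [Finset.sum_range_succ']
    simp only [if_pos rfl, Nat.choose_zero_right]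
    have hne : ∀ j, j + 1 ≠ 0 := fun j => Nat.succ_ne_zero j
    simp only [hne, if_false, Nat.add_sub_cancel]
    have tele : f k - f a = ∑ t ∈ Ico a k, (f (t+1) - f t) := by
      rw [Finset.sum_Ico_eq_sub _ h1, Finset.sum_range_sub (f := f), Finset.sum_range_sub (f := f)]
      ring
    have step : ∑ t ∈ Ico a k, (f (t+1) - f t)
        = ∑ j ∈ range (D+1), c' j * ((k.choose (j+1) : ℤ) - (a.choose (j+1) : ℤ)) := by
      rw [Finset.sum_congr rfl (fun t ht => hc' t (Finset.mem_Ico.1 ht).1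
        (by have := (Finset.mem_Ico.1 ht).2; omega))]
      rw [Finset.sum_comm]
      refine Finset.sum_congr rfl (fun j _ => ?_)
      rw [← Finset.mul_sum]
      congr 1
      rw [Finset.sum_Ico_eq_sub _ h1]
      push_cast [← sum_range_choose_eq j k, ← sum_range_choose_eq j a]
      ring
    have key := tele.trans step
    have expand : ∑ j ∈ range (D+1), c' j * ((k.choose (j+1):ℤ) - (a.choose (j+1):ℤ))
        = ∑ j ∈ range (D+1), c' j * (k.choose (j+1):ℤ)
          - ∑ j ∈ range (D+1), c' j * (a.choose (j+1):ℤ) := by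
      rw [← Finset.sum_sub_distrib]
      exact Finset.sum_congr rfl fun j _ => by ring
    rw [expand] at key
    simp only [if_true, Nat.cast_one, mul_one]
    linarith [key]

/-! ### Counting subsets / vectors by size -/

lemma card_filter_card (n : ℕ) (p : ℕ → Prop) :
    (((univ : Finset (Finset (Fin n)))).filter (fun S => p S.card)).card
      = ∑ k ∈ range (n+1), if p k then n.choose k else 0 := by
  rw [Finset.card_eq_sum_card_fiberwise
    (f := fun S => S.card) (t := (range (n+1)).filter p) ?_]
  · rw [← Finset.sum_filter]
    refine Finset.sum_congr rfl fun k hk => ?_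
    simp only [Finset.mem_filter, Finset.mem_range] at hk
    obtain ⟨hkn, hp⟩ := hk
    have : ((univ : Finset (Finset (Fin n))).filter (fun S => p S.card)).filter
        (fun S => S.card = k) = Finset.powersetCard k (univ : Finset (Fin n)) := by
      ext S
      simp only [Finset.mem_filter, Finset.mem_univ, true_and,
        Finset.mem_powersetCard_univ]
      constructor
      · rintro ⟨-, h⟩; exact h
      · rintro h; exact ⟨h ▸ hp, h⟩
    rw [this, Finset.card_powersetCard, Finset.card_univ, Fintype.card_fin]
  · intro S hS
    simp only [Finset.mem_coe, Finset.mem_filter, Finset.mem_range] at hS ⊢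
    refine ⟨Nat.lt_succ_of_le ?_, hS.2⟩
    simpa using Finset.card_le_univ S

def suppF {n : ℕ} (z : Fin n → Bool) : Finset (Fin n) :=
  univ.filter (fun i => z i = true)

lemma wt_eq_suppF {n : ℕ} (z : Fin n → Bool) : wt z = (suppF z).card := by
  unfold wt suppF
  congr 1

lemma suppF_inj {n : ℕ} {y₁ y₂ : Fin n → Bool} (h : suppF y₁ = suppF y₂) : y₁ = y₂ := by
  funext i
  have h1 : (i ∈ suppF y₁) ↔ (i ∈ suppF y₂) := by rw [h]
  simp only [suppF, Finset.mem_filter, Finset.mem_univ, true_and] at h1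
  cases hy1 : y₁ i <;> cases hy2 : y₂ i <;> simp_all

lemma card_filter_wt (n : ℕ) (p : ℕ → Prop) :
    (((univ : Finset (Fin n → Bool))).filter (fun z => p (wt z))).card
      = ∑ k ∈ range (n+1), if p k then n.choose k else 0 := by
  rw [← card_filter_card n p]
  apply Finset.card_bij (fun z _ => suppF z)
  · intro z hz
    simp only [Finset.mem_filter, Finset.mem_univ, true_and] at hz ⊢
    rwa [← wt_eq_suppF]
  · intro z1 h1 z2 h2 h
    exact suppF_inj h
  · intro S hS
    refine ⟨fun i => decide (i ∈ S), ?_, ?_⟩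
    · simp only [Finset.mem_filter, Finset.mem_univ, true_and] at hS ⊢
      have : suppF (fun i => decide (i ∈ S)) = S := by
        ext i; simp [suppF]
      rw [wt_eq_suppF, this]
      exact hS
    · ext i; simp [suppF]

/-! ### Binomial tail bounds -/

lemma tail_bound (n : ℕ) (lam t : ℝ) (h0 : 0 < lam) (h1 : lam ≤ 1) :
    ∑ k ∈ range (n+1), (if (k:ℝ) ≤ t then (n.choose k : ℝ) else 0)
      ≤ lam ^ (-t) * (1+lam)^n := by
  have key : ∀ k ∈ range (n+1), (if (k:ℝ) ≤ t then (n.choose k : ℝ) else 0)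
      ≤ lam ^ (-t) * (lam ^ k * (n.choose k : ℝ)) := by
    intro k _
    by_cases hk : (k:ℝ) ≤ t
    · rw [if_pos hk]
      have h2 : lam ^ (-t) * lam ^ ((k:ℝ)) = lam ^ ((k:ℝ) - t) := by
        rw [← Real.rpow_add h0]; ring_nf
      have h3 : (1:ℝ) ≤ lam ^ ((k:ℝ) - t) := by
        rw [show (1:ℝ) = lam ^ (0:ℝ) by simp]
        exact Real.rpow_le_rpow_of_exponent_ge h0 h1 (by linarith)
      have h4 : lam ^ ((k:ℝ)) = lam ^ k := Real.rpow_natCast lam k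
      have h5 : (1:ℝ) ≤ lam ^ (-t) * lam ^ k := by rw [← h4, h2]; exact h3
      calc (n.choose k : ℝ) = 1 * (n.choose k : ℝ) := by ring
        _ ≤ (lam ^ (-t) * lam ^ k) * (n.choose k : ℝ) :=
            mul_le_mul_of_nonneg_right h5 (Nat.cast_nonneg _)
        _ = lam ^ (-t) * (lam ^ k * (n.choose k : ℝ)) := by ring
    · rw [if_neg hk]
      positivity
  calc ∑ k ∈ range (n+1), (if (k:ℝ) ≤ t then (n.choose k : ℝ) else 0)
      ≤ ∑ k ∈ range (n+1), lam ^ (-t) * (lam ^ k * (n.choose k : ℝ)) :=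
        Finset.sum_le_sum key
    _ = lam ^ (-t) * ∑ k ∈ range (n+1), lam ^ k * (1:ℝ) ^ (n-k) * (n.choose k : ℝ) := by
        rw [Finset.mul_sum]; exact Finset.sum_congr rfl fun k _ => by ring
    _ = lam ^ (-t) * (lam + 1)^n := by rw [add_pow]
    _ = lam ^ (-t) * (1+lam)^n := by ring_nf

lemma logTaylor {x : ℝ} (h0 : 0 ≤ x) (h : x ≤ 1/2) :
    Real.log (1-x) ≤ -x - x^2/2 + 2*x^3 ∧ -x - x^2/2 - 2*x^3 ≤ Real.log (1-x) := by
  have habs : |x| < 1 := by rw [abs_of_nonneg h0]; linarith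
  have := Real.abs_log_sub_add_sum_range_le habs 2
  rw [Finset.sum_range_succ, Finset.sum_range_one] at this
  rw [abs_le] at this
  rw [abs_of_nonneg h0] at this
  have hd : x^3 / (1-x) ≤ 2*x^3 := by
    rw [div_le_iff₀ (by linarith)]
    nlinarith [pow_nonneg h0 3]
  norm_num at this
  constructor <;> nlinarith [this.1, this.2]

lemma lemmaA (n : ℕ) (β t : ℝ) (hb0 : 0 < β) (hb1 : β ≤ 1/2)
    (ht : t ≤ (1/2 - β)*n) :
    ∑ k ∈ range (n+1), (if (k:ℝ) ≤ t then (n.choose k : ℝ) else 0)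
      ≤ Real.exp (n * (Real.log 2 - β^2/2)) := by
  have hn0 : (0:ℝ) ≤ n := Nat.cast_nonneg n
  have hb : (0:ℝ) < 1 - β := by linarith
  refine (tail_bound n (1-β) t (by linarith) (by linarith)).trans ?_
  have step : (1-β) ^ (-t) ≤ (1-β) ^ (-((1/2-β)*(n:ℝ))) :=
    Real.rpow_le_rpow_of_exponent_ge hb (by linarith) (by linarith)
  have hpow : (0:ℝ) < (1+(1-β))^n := pow_pos (by linarith) n
  refine le_trans (mul_le_mul_of_nonneg_right step (le_of_lt hpow)) ?_
  have hpos : (0:ℝ) < (1-β) ^ (-((1/2-β)*(n:ℝ))) * (1+(1-β))^n :=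
    mul_pos (Real.rpow_pos_of_pos hb _) hpow
  rw [← Real.exp_log hpos, Real.exp_le_exp]
  rw [Real.log_mul (ne_of_gt (Real.rpow_pos_of_pos hb _))
    (ne_of_gt hpow), Real.log_rpow hb, Real.log_pow]
  have hT1 := (logTaylor (x := β) (le_of_lt hb0) hb1).2
  have hT2 : Real.log (1 - β/2) ≤ -(β/2) - (β/2)^2/2 + 2*(β/2)^3 :=
    (logTaylor (x := β/2) (by linarith) (by linarith)).1
  have hlog2 : Real.log (1 + (1-β)) = Real.log 2 + Real.log (1 - β/2) := by
    rw [← Real.log_mul (by norm_num) (by linarith)]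
    ring_nf
  rw [hlog2]
  have hβn : 0 ≤ (1/2 - β) * (n:ℝ) := by nlinarith
  set A := Real.log (1-β) with hA
  set B := Real.log (1-β/2) with hB
  have A1 : -((1/2-β)*(n:ℝ)) * A ≤ ((1/2-β)*(n:ℝ)) * (β+β^2/2+2*β^3) := by
    nlinarith [mul_le_mul_of_nonneg_left (neg_le_neg hT1) hβn]
  have A2 : (n:ℝ) * B ≤ (n:ℝ) * (-(β/2) - β^2/8 + β^3/4) := by
    nlinarith [mul_le_mul_of_nonneg_left hT2 hn0]
  have A3 : ((1/2-β)*(β+β^2/2+2*β^3) + (-(β/2) - β^2/8 + β^3/4)) ≤ -β^2/2 := by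
    nlinarith [hb0, hb1, sq_nonneg β, mul_pos hb0 hb0]
  nlinarith [A1, A2, mul_le_mul_of_nonneg_left A3 hn0]

lemma reflect_tail (n : ℕ) (s : ℝ) :
    ∑ k ∈ range (n+1), (if s ≤ (k:ℝ) then (n.choose k : ℝ) else 0)
      = ∑ k ∈ range (n+1), (if (k:ℝ) ≤ (n:ℝ) - s then (n.choose k : ℝ) else 0) := by
  rw [← Finset.sum_range_reflect]
  refine Finset.sum_congr rfl fun j hj => ?_
  have hjn : j ≤ n := by
    have := Finset.mem_range.1 hj; omega
  have h1 : n + 1 - 1 - j = n - j := by omega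
  rw [h1]
  have h2 : ((n - j : ℕ) : ℝ) = (n:ℝ) - (j:ℝ) := by
    push_cast [Nat.cast_sub hjn]; ring
  have h3 : n.choose (n - j) = n.choose j := Nat.choose_symm hjn
  rw [h2, h3]
  congr 1
  rw [eq_iff_iff]
  constructor <;> intro <;> linarith


/-! ### The construction -/

section Construction

variable (K : Type) [Field K] (ε : ℝ) (n : ℕ)

def aP : ℕ := ⌈ε*(n:ℝ)/4⌉₊

def DP : ℕ := ⌊(1/2-ε)*(n:ℝ)⌋₊

def cP : ℕ → ℤ := Classical.choose (newton (DP ε n) (aP ε n) (fun k => (-1)^k))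

lemma cP_spec : ∀ k, aP ε n ≤ k → k ≤ aP ε n + DP ε n →
    ((-1:ℤ))^k = ∑ i ∈ range (DP ε n + 1), cP ε n i * (k.choose i) :=
  Classical.choose_spec (newton (DP ε n) (aP ε n) (fun k => (-1)^k))

def goodW (k : ℕ) : Prop :=
  ((n:ℝ)/2 - ε*(n:ℝ)/8 ≤ (k:ℝ)) ∧ ((k:ℝ) ≤ (n:ℝ)/2 + ε*(n:ℝ)/8)

def smallSets : Finset (Finset (Fin n)) := univ.filter fun S => S.card ≤ DP ε n

def Tset : Finset (Finset (Fin n)) := univ.filter fun S => (S.card:ℝ) ≤ ε*(n:ℝ)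

def badR : Finset (Fin n → Bool) := univ.filter fun z => ¬ goodW ε n (wt z)

def Pm : Matrix (Fin n → Bool) (Fin n → Bool) K :=
  Matrix.of fun x y => ∑ S ∈ smallSets ε n,
    (((cP ε n S.card : ℤ) : K) * ∏ i ∈ S, (if x i then (1:K) else 0)) *
      (∏ i ∈ S, (if y i then (1:K) else 0))

def Rm : Matrix (Fin n → Bool) (Fin n → Bool) K :=
  Matrix.of fun x y => if goodW ε n (wt x) then 0 else (Had K n x y - Pm K ε n x y)

def Cm : Matrix (Fin n → Bool) (Fin n → Bool) K :=
  Matrix.of fun x y =>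
    if goodW ε n (wt x) ∧ ¬ goodW ε n (wt y) then (Had K n x y - Pm K ε n x y) else 0

def Mfin : Matrix (Fin n → Bool) (Fin n → Bool) K := Pm K ε n + Rm K ε n + Cm K ε n

variable {K ε n}

lemma prod_ind (S : Finset (Fin n)) (z : Fin n → Bool) :
    (∏ i ∈ S, (if z i then (1:K) else 0)) = if S ⊆ suppF z then 1 else 0 := by
  by_cases h : S ⊆ suppF z
  · rw [if_pos h]
    apply Finset.prod_eq_one
    intro i hi
    have := h hi
    simp only [suppF, Finset.mem_filter] at this
    simp [this.2]
  · rw [if_neg h]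
    obtain ⟨i, hiS, hins⟩ := Finset.not_subset.1 h
    apply Finset.prod_eq_zero hiS
    have hz : z i = false := by
      simp only [suppF, Finset.mem_filter, Finset.mem_univ, true_and] at hins
      simpa using hins
    simp [hz]

lemma ip_eq_card (x y : Fin n → Bool) : ip x y = (suppF x ∩ suppF y).card := by
  have h : (univ.filter (fun i => x i ∧ y i) : Finset (Fin n)) = suppF x ∩ suppF y := by
    ext i; simp [suppF]
  rw [ip, h]

lemma Pm_apply (x y : Fin n → Bool) :
    Pm K ε n x y
      = ((∑ i ∈ range (DP ε n + 1), cP ε n i * ((ip x y).choose i) : ℤ) : K) := by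
  set I := suppF x ∩ suppF y with hI
  have h1 : Pm K ε n x y = ∑ S ∈ (smallSets ε n).filter (fun S => S ⊆ I),
      ((cP ε n S.card : ℤ) : K) := by
    show (∑ S ∈ smallSets ε n, _) = _
    rw [Finset.sum_filter]
    refine Finset.sum_congr rfl fun S _ => ?_
    rw [prod_ind, prod_ind]
    by_cases hx : S ⊆ suppF x <;> by_cases hy : S ⊆ suppF y <;>
      simp [hx, hy, hI, Finset.subset_inter_iff]
  have h2 : (smallSets ε n).filter (fun S => S ⊆ I)
      = I.powerset.filter (fun S => S.card ≤ DP ε n) := by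
    ext S
    simp only [smallSets, Finset.mem_filter, Finset.mem_univ, true_and,
      Finset.mem_powerset]
    tauto
  rw [h1, h2, ← Finset.sum_fiberwise_of_maps_to
      (g := fun S : Finset (Fin n) => S.card) (t := range (DP ε n + 1))
      (fun S hS => by
        simp only [Finset.mem_filter] at hS
        exact Finset.mem_range.2 (Nat.lt_succ_of_le hS.2))
      (fun S : Finset (Fin n) => ((cP ε n S.card : ℤ) : K))]
  push_cast
  refine Finset.sum_congr rfl fun i hi => ?_
  have h3 : (I.powerset.filter (fun S => S.card ≤ DP ε n)).filter (fun S => S.card = i)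
      = Finset.powersetCard i I := by
    ext S
    simp only [Finset.mem_filter, Finset.mem_powerset, Finset.mem_powersetCard]
    have hle : i ≤ DP ε n := Nat.lt_succ_iff.1 (Finset.mem_range.1 hi)
    constructor
    · rintro ⟨⟨h4, h5⟩, h6⟩; exact ⟨h4, h6⟩
    · rintro ⟨h4, h6⟩; exact ⟨⟨h4, h6 ▸ hle⟩, h6⟩
  rw [h3, Finset.sum_congr rfl (fun S hS => by rw [(Finset.mem_powersetCard.1 hS).2]),
    Finset.sum_const, Finset.card_powersetCard, nsmul_eq_mul, ip_eq_card, ← hI]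
  ring

lemma Had_cast (x y : Fin n → Bool) : Had K n x y = (((-1:ℤ)^(ip x y) : ℤ) : K) := by
  show (-1:K)^(ip x y) = _
  push_cast
  ring

lemma Mfin_apply (x y : Fin n → Bool) :
    Mfin K ε n x y = Pm K ε n x y + Rm K ε n x y + Cm K ε n x y := rfl

lemma Mfin_eq_Pm {x y : Fin n → Bool} (hx : goodW ε n (wt x)) (hy : goodW ε n (wt y)) :
    Mfin K ε n x y = Pm K ε n x y := by
  rw [Mfin_apply]
  show Pm K ε n x y + (if goodW ε n (wt x) then 0 else _)
    + (if goodW ε n (wt x) ∧ ¬ goodW ε n (wt y) then _ else 0) = Pm K ε n x y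
  rw [if_pos hx, if_neg (by tauto)]
  ring

lemma Mfin_eq_Had_of_bad {x y : Fin n → Bool}
    (h : ¬ goodW ε n (wt x) ∨ ¬ goodW ε n (wt y)) :
    Mfin K ε n x y = Had K n x y := by
  rw [Mfin_apply]
  show Pm K ε n x y + (if goodW ε n (wt x) then 0 else Had K n x y - Pm K ε n x y)
    + (if goodW ε n (wt x) ∧ ¬ goodW ε n (wt y) then Had K n x y - Pm K ε n x y else 0)
    = Had K n x y
  by_cases hx : goodW ε n (wt x)
  · have hy : ¬ goodW ε n (wt y) := by tauto
    rw [if_pos hx, if_pos ⟨hx, hy⟩]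
    ring
  · rw [if_neg hx, if_neg (by tauto)]
    ring

lemma Mfin_eq_Had_mid {x y : Fin n → Bool}
    (hx : goodW ε n (wt x)) (hy : goodW ε n (wt y))
    (h1 : aP ε n ≤ ip x y) (h2 : ip x y ≤ aP ε n + DP ε n) :
    Mfin K ε n x y = Had K n x y := by
  rw [Mfin_eq_Pm hx hy, Pm_apply, Had_cast]
  exact_mod_cast congrArg (fun z : ℤ => (z : K)) (cP_spec ε n (ip x y) h1 h2).symm

lemma Err_subset {x : Fin n → Bool} (hx : goodW ε n (wt x)) :
    ((univ : Finset (Fin n → Bool)).filter fun y => Mfin K ε n x y ≠ Had K n x y)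
      ⊆ ((univ : Finset (Fin n → Bool)).filter
            fun y => goodW ε n (wt y) ∧ ip x y < aP ε n)
        ∪ ((univ : Finset (Fin n → Bool)).filter
            fun y => goodW ε n (wt y) ∧ aP ε n + DP ε n < ip x y) := by
  intro y hy
  simp only [Finset.mem_filter, Finset.mem_univ, true_and, Finset.mem_union] at hy ⊢
  by_cases hgy : goodW ε n (wt y)
  · by_cases hlow : ip x y < aP ε n
    · exact Or.inl ⟨hgy, hlow⟩
    · refine Or.inr ⟨hgy, ?_⟩
      by_contra hhigh
      exact hy (Mfin_eq_Had_mid hx hgy (by omega) (by omega))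
  · exact absurd (Mfin_eq_Had_of_bad (Or.inr hgy)) hy

lemma compl_card_real (s : Finset (Fin n)) : ((sᶜ : Finset (Fin n)).card : ℝ) = n - s.card := by
  rw [Finset.card_compl]
  rw [Nat.cast_sub (by simpa using Finset.card_le_univ s)]
  simp

lemma card_low {x : Fin n → Bool} (hε0 : 0 < ε) (hεn : 8 ≤ ε*(n:ℝ))
    (hx : goodW ε n (wt x)) :
    (((univ : Finset (Fin n → Bool))).filter
        (fun y => goodW ε n (wt y) ∧ ip x y < aP ε n)).card
      ≤ (Tset ε n).card * (Tset ε n).card := by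
  rw [← Finset.card_product]
  apply Finset.card_le_card_of_injOn
    (fun y => (suppF x ∩ suppF y, (suppF x)ᶜ \ suppF y))
  · intro y hy
    simp only [Finset.mem_coe, Finset.mem_filter, Finset.mem_univ, true_and] at hy
    obtain ⟨hgy, hk⟩ := hy
    have hipR : (ip x y : ℝ) ≤ ε*(n:ℝ)/4 := by
      have h1 : (aP ε n : ℝ) < ε*(n:ℝ)/4 + 1 := Nat.ceil_lt_add_one (by positivity)
      have h2 : (ip x y : ℝ) + 1 ≤ (aP ε n : ℝ) := by exact_mod_cast hk
      linarith
    have e0 : ((suppF x ∩ suppF y).card : ℝ) = (ip x y : ℝ) := by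
      rw [ip_eq_card]
    have e1 := Finset.card_sdiff_add_card_inter ((suppF x)ᶜ) (suppF y)
    have e2 := compl_card_real (suppF x)
    have e3 := Finset.card_inter_add_card_sdiff (suppF y) (suppF x)
    have e4 : (suppF y \ suppF x) = (suppF x)ᶜ ∩ suppF y := by
      ext i; simp [and_comm]
    have e5 : (suppF y ∩ suppF x) = (suppF x ∩ suppF y) := Finset.inter_comm _ _
    rw [e4, e5] at e3
    have e1R : (((suppF x)ᶜ \ suppF y).card : ℝ) + (((suppF x)ᶜ ∩ suppF y).card : ℝ)
        = (((suppF x)ᶜ).card : ℝ) := by exact_mod_cast congrArg (Nat.cast : ℕ → ℝ) e1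
    have e3R : ((suppF x ∩ suppF y).card : ℝ) + (((suppF x)ᶜ ∩ suppF y).card : ℝ)
        = ((suppF y).card : ℝ) := by exact_mod_cast congrArg (Nat.cast : ℕ → ℝ) e3
    have hwx := hx
    have hwy := hgy
    rw [goodW] at hwx hwy
    rw [wt_eq_suppF] at hwx hwy
    simp only [Finset.mem_coe, Finset.mem_product, Tset, Finset.mem_filter, Finset.mem_univ, true_and]
    constructor
    · rw [e0]; linarith
    · linarith [hwx.1, hwy.1]
  · intro y₁ hy₁ y₂ hy₂ heq
    simp only [Prod.mk.injEq] at heq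
    have r : ∀ y : Fin n → Bool,
        suppF y = (suppF x ∩ suppF y) ∪ ((suppF x)ᶜ \ ((suppF x)ᶜ \ suppF y)) := by
      intro y; ext i; by_cases h : i ∈ suppF x <;> simp [h]
    apply suppF_inj
    rw [r y₁, r y₂, heq.1, heq.2]

lemma card_high {x : Fin n → Bool} (hε0 : 0 < ε) (hε1 : ε ≤ 1/4) (hεn : 8 ≤ ε*(n:ℝ))
    (hx : goodW ε n (wt x)) :
    (((univ : Finset (Fin n → Bool))).filter
        (fun y => goodW ε n (wt y) ∧ aP ε n + DP ε n < ip x y)).card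
      ≤ (Tset ε n).card * (Tset ε n).card := by
  rw [← Finset.card_product]
  apply Finset.card_le_card_of_injOn
    (fun y => (suppF x \ suppF y, suppF y \ suppF x))
  · intro y hy
    simp only [Finset.mem_coe, Finset.mem_filter, Finset.mem_univ, true_and] at hy
    obtain ⟨hgy, hk⟩ := hy
    have hn0 : (0:ℝ) ≤ n := Nat.cast_nonneg n
    have hipR : ε*(n:ℝ)/4 + ((1/2-ε)*(n:ℝ) - 1) + 1 ≤ (ip x y : ℝ) := by
      have h1 : ε*(n:ℝ)/4 ≤ (aP ε n : ℝ) := Nat.le_ceil _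
      have h2 : (1/2-ε)*(n:ℝ) < (DP ε n : ℝ) + 1 := Nat.lt_floor_add_one _
      have h3 : (aP ε n : ℝ) + (DP ε n : ℝ) + 1 ≤ (ip x y : ℝ) := by exact_mod_cast hk
      linarith
    have e0 : ((suppF x ∩ suppF y).card : ℝ) = (ip x y : ℝ) := by rw [ip_eq_card]
    have e1 := Finset.card_sdiff_add_card_inter (suppF x) (suppF y)
    have e3 := Finset.card_inter_add_card_sdiff (suppF y) (suppF x)
    have e5 : (suppF y ∩ suppF x) = (suppF x ∩ suppF y) := Finset.inter_comm _ _
    rw [e5] at e3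
    have e1R : ((suppF x \ suppF y).card : ℝ) + ((suppF x ∩ suppF y).card : ℝ)
        = ((suppF x).card : ℝ) := by exact_mod_cast congrArg (Nat.cast : ℕ → ℝ) e1
    have e3R : ((suppF x ∩ suppF y).card : ℝ) + ((suppF y \ suppF x).card : ℝ)
        = ((suppF y).card : ℝ) := by exact_mod_cast congrArg (Nat.cast : ℕ → ℝ) e3
    have hwx := hx
    have hwy := hgy
    rw [goodW] at hwx hwy
    rw [wt_eq_suppF] at hwx hwy
    simp only [Finset.mem_coe, Finset.mem_product, Tset, Finset.mem_filter, Finset.mem_univ, true_and]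
    constructor
    · linarith [hwx.2]
    · linarith [hwy.2]
  · intro y₁ hy₁ y₂ hy₂ heq
    simp only [Prod.mk.injEq] at heq
    have r : ∀ y : Fin n → Bool,
        suppF y = (suppF x \ (suppF x \ suppF y)) ∪ (suppF y \ suppF x) := by
      intro y
      ext i
      by_cases h1 : i ∈ suppF x <;> by_cases h2 : i ∈ suppF y <;> simp [h1, h2]
    apply suppF_inj
    rw [r y₁, r y₂, heq.1, heq.2]

end Construction


/-! ### Rank of the construction -/

section RankBound

variable (K : Type) [Field K] (ε : ℝ) (n : ℕ)

lemma rank_Pm : (Pm K ε n).rank ≤ (smallSets ε n).card := by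
  have h : Pm K ε n = Matrix.of fun x y => ∑ S ∈ smallSets ε n,
      (fun (S : Finset (Fin n)) (x : Fin n → Bool) =>
        ((cP ε n S.card : ℤ) : K) * ∏ i ∈ S, (if x i then (1:K) else 0)) S x *
      (fun (S : Finset (Fin n)) (y : Fin n → Bool) =>
        ∏ i ∈ S, (if y i then (1:K) else 0)) S y := rfl
  rw [h]
  exact rank_sum_outer _ _ _

lemma rank_Rm : (Rm K ε n).rank ≤ (badR ε n).card := by
  have h : Rm K ε n = Matrix.of fun x y => ∑ x₀ ∈ badR ε n,
      (if x = x₀ then (1:K) else 0) * (Had K n x₀ y - Pm K ε n x₀ y) := by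
    ext x y
    simp only [Matrix.of_apply]
    rw [Finset.sum_congr rfl (fun x₀ (_ : x₀ ∈ badR ε n) => by
      rw [ite_mul, one_mul, zero_mul])]
    rw [Finset.sum_ite_eq]
    show (if goodW ε n (wt x) then 0 else Had K n x y - Pm K ε n x y) = _
    by_cases hx : goodW ε n (wt x) <;> simp [badR, hx]
  rw [h]
  exact rank_sum_outer _ _ _

lemma rank_Cm : (Cm K ε n).rank ≤ (badR ε n).card := by
  have h : Cm K ε n = Matrix.of fun x y => ∑ y₀ ∈ badR ε n,
      (if goodW ε n (wt x) then Had K n x y₀ - Pm K ε n x y₀ else 0) *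
        (if y = y₀ then (1:K) else 0) := by
    ext x y
    simp only [Matrix.of_apply]
    rw [Finset.sum_congr rfl (fun y₀ (_ : y₀ ∈ badR ε n) => by
      rw [mul_ite, mul_one, mul_zero])]
    rw [Finset.sum_ite_eq]
    show (if goodW ε n (wt x) ∧ ¬ goodW ε n (wt y) then Had K n x y - Pm K ε n x y else 0) = _
    by_cases hx : goodW ε n (wt x) <;> by_cases hy : goodW ε n (wt y) <;>
      simp [badR, hx, hy]
  rw [h]
  exact rank_sum_outer _ _ _

lemma rank_Mfin : (Mfin K ε n).rank
    ≤ (smallSets ε n).card + (badR ε n).card + (badR ε n).card :=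
  calc (Mfin K ε n).rank ≤ (Pm K ε n + Rm K ε n).rank + (Cm K ε n).rank :=
        rank_add_le' _ _
    _ ≤ ((Pm K ε n).rank + (Rm K ε n).rank) + (Cm K ε n).rank :=
        Nat.add_le_add_right (rank_add_le' _ _) _
    _ ≤ _ := by
        have := rank_Pm K ε n
        have := rank_Rm K ε n
        have := rank_Cm K ε n
        omega

end RankBound

/-! ### Size bounds -/

section SizeBounds

variable (ε : ℝ) (n : ℕ)

lemma smallSets_bound (hε0 : 0 < ε) (hε1 : ε ≤ 1/4) :
    ((smallSets ε n).card : ℝ) ≤ Real.exp (n * (Real.log 2 - ε^2/2)) := by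
  have hcN : (smallSets ε n).card
      = ∑ k ∈ range (n+1), if k ≤ DP ε n then n.choose k else 0 := by
    rw [smallSets]
    convert card_filter_card n (fun k => k ≤ DP ε n) using 2 <;> congr!
  have hcast : ((smallSets ε n).card : ℝ)
      = ∑ k ∈ range (n+1), (if k ≤ DP ε n then (n.choose k : ℝ) else 0) := by
    rw [hcN]
    push_cast
    rfl
  rw [hcast]
  have hmono : ∑ k ∈ range (n+1), (if k ≤ DP ε n then (n.choose k : ℝ) else 0)
      ≤ ∑ k ∈ range (n+1), (if (k:ℝ) ≤ (1/2-ε)*(n:ℝ) then (n.choose k : ℝ) else 0) := by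
    apply Finset.sum_le_sum
    intro k _
    by_cases h : k ≤ DP ε n
    · rw [if_pos h, if_pos ?_]
      have h1 : (k:ℝ) ≤ (DP ε n : ℝ) := Nat.cast_le.2 h
      have h2 : (DP ε n : ℝ) ≤ (1/2-ε)*(n:ℝ) := Nat.floor_le (by
        have : (0:ℝ) ≤ (n:ℝ) := Nat.cast_nonneg n
        nlinarith)
      linarith
    · rw [if_neg h]
      by_cases h2 : (k:ℝ) ≤ (1/2-ε)*(n:ℝ)
      · rw [if_pos h2]; positivity
      · rw [if_neg h2]
  exact hmono.trans (lemmaA n ε ((1/2-ε)*(n:ℝ)) hε0 (by linarith) le_rfl)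

lemma badR_bound (hε0 : 0 < ε) (hε1 : ε ≤ 1/4) :
    ((badR ε n).card : ℝ) ≤ 2 * Real.exp (n * (Real.log 2 - (ε/8)^2/2)) := by
  have hcN : (badR ε n).card
      = ∑ k ∈ range (n+1), if ¬ goodW ε n k then n.choose k else 0 := by
    rw [badR]
    convert card_filter_wt n (fun k => ¬ goodW ε n k) using 2 <;> congr!
  have hcast : ((badR ε n).card : ℝ)
      = ∑ k ∈ range (n+1), (if ¬ goodW ε n k then (n.choose k : ℝ) else 0) := by
    rw [hcN]
    push_cast
    rfl
  rw [hcast]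
  have hsplit : ∑ k ∈ range (n+1), (if ¬ goodW ε n k then (n.choose k : ℝ) else 0)
      ≤ (∑ k ∈ range (n+1), (if (k:ℝ) ≤ (n:ℝ)/2 - ε*(n:ℝ)/8 then (n.choose k : ℝ) else 0))
        + (∑ k ∈ range (n+1),
            (if (n:ℝ)/2 + ε*(n:ℝ)/8 ≤ (k:ℝ) then (n.choose k : ℝ) else 0)) := by
    rw [← Finset.sum_add_distrib]
    apply Finset.sum_le_sum
    intro k _
    have hC : (0:ℝ) ≤ (n.choose k : ℝ) := Nat.cast_nonneg _
    by_cases hg : goodW ε n k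
    · rw [if_neg (not_not_intro hg)]
      have t1 : (0:ℝ) ≤ (if (k:ℝ) ≤ (n:ℝ)/2 - ε*(n:ℝ)/8 then (n.choose k : ℝ) else 0) := by
        split <;> simp [hC]
      have t2 : (0:ℝ) ≤ (if (n:ℝ)/2 + ε*(n:ℝ)/8 ≤ (k:ℝ) then (n.choose k : ℝ) else 0) := by
        split <;> simp [hC]
      linarith
    · rw [if_pos hg]
      rw [goodW] at hg
      push_neg at hg
      by_cases h1 : (n:ℝ)/2 - ε*(n:ℝ)/8 ≤ (k:ℝ)
      · have h2 := hg h1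
        rw [if_pos (le_of_lt h2)]
        have t1 : (0:ℝ) ≤ (if (k:ℝ) ≤ (n:ℝ)/2 - ε*(n:ℝ)/8 then (n.choose k : ℝ) else 0) := by
          split <;> simp [hC]
        linarith
      · push_neg at h1
        rw [if_pos (le_of_lt h1)]
        have t2 : (0:ℝ) ≤ (if (n:ℝ)/2 + ε*(n:ℝ)/8 ≤ (k:ℝ) then (n.choose k : ℝ) else 0) := by
          split <;> simp [hC]
        linarith
  have hβ0 : (0:ℝ) < ε/8 := by linarith
  have hβ1 : ε/8 ≤ 1/2 := by linarith
  have hlow : ∑ k ∈ range (n+1),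
      (if (k:ℝ) ≤ (n:ℝ)/2 - ε*(n:ℝ)/8 then (n.choose k : ℝ) else 0)
      ≤ Real.exp (n * (Real.log 2 - (ε/8)^2/2)) :=
    lemmaA n (ε/8) ((n:ℝ)/2 - ε*(n:ℝ)/8) hβ0 hβ1 (by ring_nf; linarith)
  have hhigh : ∑ k ∈ range (n+1),
      (if (n:ℝ)/2 + ε*(n:ℝ)/8 ≤ (k:ℝ) then (n.choose k : ℝ) else 0)
      ≤ Real.exp (n * (Real.log 2 - (ε/8)^2/2)) := by
    rw [reflect_tail]
    exact lemmaA n (ε/8) ((n:ℝ) - ((n:ℝ)/2 + ε*(n:ℝ)/8)) hβ0 hβ1 (by ring_nf; linarith)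
  linarith

lemma Tcard_bound (hε0 : 0 < ε) (hε1 : ε ≤ 1/4) :
    ((Tset ε n).card : ℝ) ≤ Real.exp (2*ε*(n:ℝ)*Real.log (1/ε)) := by
  have hcN : (Tset ε n).card
      = ∑ k ∈ range (n+1), if (k:ℝ) ≤ ε*(n:ℝ) then n.choose k else 0 := by
    rw [Tset]
    convert card_filter_card n (fun k => (k:ℝ) ≤ ε*(n:ℝ)) using 2
  have hcast : ((Tset ε n).card : ℝ)
      = ∑ k ∈ range (n+1), (if (k:ℝ) ≤ ε*(n:ℝ) then (n.choose k : ℝ) else 0) := by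
    rw [hcN]
    push_cast
    rfl
  rw [hcast]
  refine (tail_bound n ε (ε*(n:ℝ)) hε0 (by linarith)).trans ?_
  have hn0 : (0:ℝ) ≤ (n:ℝ) := Nat.cast_nonneg n
  have hpow : (0:ℝ) < (1+ε)^n := pow_pos (by linarith) n
  have hpos : (0:ℝ) < ε ^ (-(ε*(n:ℝ))) * (1+ε)^n :=
    mul_pos (Real.rpow_pos_of_pos hε0 _) hpow
  rw [← Real.exp_log hpos, Real.exp_le_exp,
    Real.log_mul (ne_of_gt (Real.rpow_pos_of_pos hε0 _)) (ne_of_gt hpow),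
    Real.log_rpow hε0, Real.log_pow]
  have hl1 : Real.log (1+ε) ≤ ε := by
    have := Real.log_le_sub_one_of_pos (show (0:ℝ) < 1+ε by linarith)
    linarith
  have hlinv : Real.log (1/ε) = - Real.log ε := by
    rw [one_div, Real.log_inv]
  have hge1 : 1 ≤ Real.log (1/ε) := by
    have h4 : Real.exp 1 ≤ 1/ε := by
      have he : Real.exp 1 < 2.7182818286 := Real.exp_one_lt_d9
      have h5 : (4:ℝ) ≤ 1/ε := by
        rw [le_div_iff₀ hε0]; linarith
      linarith
    calc (1:ℝ) = Real.log (Real.exp 1) := (Real.log_exp 1).symm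
      _ ≤ Real.log (1/ε) := Real.log_le_log (Real.exp_pos 1) h4
  have key : (n:ℝ) * Real.log (1+ε) ≤ ε*(n:ℝ)*Real.log (1/ε) := by
    have s1 : (n:ℝ) * Real.log (1+ε) ≤ (n:ℝ) * ε := by
      nlinarith [mul_le_mul_of_nonneg_left hl1 hn0]
    nlinarith [mul_nonneg (mul_nonneg hε0.le hn0) (by linarith : (0:ℝ) ≤ Real.log (1/ε) - 1)]
  have hrw : -(ε*(n:ℝ))*Real.log ε = ε*(n:ℝ)*Real.log (1/ε) := by
    rw [hlinv]; ring
  linarith [key, hrw.le, hrw.ge]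

end SizeBounds

end HadAux

open HadAux in
/-- Strong non-rigidity of Hadamard matrices: few modifications per row suffice. -/
theorem hadamard_not_rigid_rowwise :
    ∃ c₁ c₂ ε₀ : ℝ, 0 < c₁ ∧ 0 < c₂ ∧ 0 < ε₀ ∧
      ∀ (K : Type) [Field K], ∀ ε : ℝ, 0 < ε → ε < ε₀ →
        ∃ n₀ : ℕ, ∀ n : ℕ, n₀ ≤ n →
          ∃ M' : Matrix (Fin n → Bool) (Fin n → Bool) K,
            (M'.rank : ℝ) ≤ 5 * n * 2 ^ ((n : ℝ) - c₁ * ε ^ 2 * n) ∧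
            ∀ x : Fin n → Bool,
              (Nat.card {y : Fin n → Bool // M' x y ≠ Had K n x y} : ℝ) ≤
                2 ^ (c₂ * ε * Real.logb 2 (1 / ε) * n) := by
  refine ⟨1/256, 10, 1/4, by norm_num, by norm_num, by norm_num, ?_⟩
  intro K _ ε hε0 hε1
  refine ⟨⌈(8:ℝ)/ε⌉₊, fun n hn => ?_⟩
  have hε4 : ε ≤ 1/4 := le_of_lt hε1
  have hn8 : (8:ℝ)/ε ≤ (n:ℝ) := le_trans (Nat.le_ceil _) (Nat.cast_le.2 hn)
  have hεn : (8:ℝ) ≤ ε * n := by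
    have h := (div_le_iff₀ hε0).1 hn8
    linarith [mul_comm (n:ℝ) ε, h]
  have hn0 : (0:ℝ) ≤ (n:ℝ) := Nat.cast_nonneg n
  have hn1 : (1:ℝ) ≤ (n:ℝ) := by nlinarith
  have hlog2pos : (0:ℝ) < Real.log 2 := Real.log_pos (by norm_num)
  have hlog2le : Real.log 2 ≤ 1 := by
    have := Real.log_le_sub_one_of_pos (show (0:ℝ) < 2 by norm_num); linarith
  have hge1 : 1 ≤ Real.log (1/ε) := by
    have h4 : Real.exp 1 ≤ 1/ε := by
      have he : Real.exp 1 < 2.7182818286 := Real.exp_one_lt_d9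
      have h5 : (4:ℝ) ≤ 1/ε := by rw [le_div_iff₀ hε0]; linarith
      linarith
    calc (1:ℝ) = Real.log (Real.exp 1) := (Real.log_exp 1).symm
      _ ≤ Real.log (1/ε) := Real.log_le_log (Real.exp_pos 1) h4
  refine ⟨Mfin K ε n, ?_, ?_⟩
  · -- rank bound
    have hr := rank_Mfin K ε n
    have h1 := smallSets_bound ε n hε0 hε4
    have h2 := badR_bound ε n hε0 hε4
    have hrR : ((Mfin K ε n).rank : ℝ)
        ≤ ((smallSets ε n).card : ℝ) + ((badR ε n).card : ℝ) + ((badR ε n).card : ℝ) := by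
      exact_mod_cast hr
    have hmono : Real.exp ((n:ℝ)*(Real.log 2 - ε^2/2))
        ≤ Real.exp ((n:ℝ)*(Real.log 2 - (ε/8)^2/2)) := by
      apply Real.exp_le_exp.2
      nlinarith [sq_nonneg ε]
    have hstep : ((Mfin K ε n).rank : ℝ)
        ≤ 5 * Real.exp ((n:ℝ)*(Real.log 2 - (ε/8)^2/2)) := by linarith
    refine hstep.trans ?_
    have hrpow : (2:ℝ) ^ ((n:ℝ) - 1/256*ε^2*(n:ℝ))
        = Real.exp (((n:ℝ) - 1/256*ε^2*(n:ℝ)) * Real.log 2) := by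
      rw [Real.rpow_def_of_pos (by norm_num)]
      ring_nf
    have hcomp : Real.exp ((n:ℝ)*(Real.log 2 - (ε/8)^2/2))
        ≤ Real.exp (((n:ℝ) - 1/256*ε^2*(n:ℝ)) * Real.log 2) := by
      apply Real.exp_le_exp.2
      nlinarith [sq_nonneg ε, mul_nonneg (mul_nonneg (sq_nonneg ε) hn0)
        (le_of_lt hlog2pos)]
    have hpowpos : (0:ℝ) < (2:ℝ) ^ ((n:ℝ) - 1/256*ε^2*(n:ℝ)) :=
      Real.rpow_pos_of_pos (by norm_num) _
    calc (5:ℝ) * Real.exp ((n:ℝ)*(Real.log 2 - (ε/8)^2/2))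
        ≤ 5 * Real.exp (((n:ℝ) - 1/256*ε^2*(n:ℝ)) * Real.log 2) := by linarith
      _ = 5 * 2 ^ ((n:ℝ) - 1/256*ε^2*(n:ℝ)) := by rw [hrpow]
      _ ≤ 5 * (n:ℝ) * 2 ^ ((n:ℝ) - 1/256*ε^2*(n:ℝ)) := by nlinarith
  · -- per-row error bound
    intro x
    have hNat : (Nat.card {y : Fin n → Bool // Mfin K ε n x y ≠ Had K n x y})
        = ((univ : Finset (Fin n → Bool)).filter
            (fun y => Mfin K ε n x y ≠ Had K n x y)).card := by
      rw [Nat.card_eq_fintype_card]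
      convert Fintype.card_subtype _ using 2
    rw [hNat]
    have hlogb : (10 * ε * Real.logb 2 (1/ε) * (n:ℝ)) * Real.log 2
        = 10*ε*(n:ℝ)*Real.log (1/ε) := by
      rw [Real.logb]
      field_simp
    have htarget : (2:ℝ) ^ (10 * ε * Real.logb 2 (1/ε) * (n:ℝ))
        = Real.exp (10*ε*(n:ℝ)*Real.log (1/ε)) := by
      rw [Real.rpow_def_of_pos (by norm_num : (0:ℝ) < 2), mul_comm (Real.log 2), hlogb]
    rw [htarget]
    by_cases hx : goodW ε n (wt x)
    · have hsub := Err_subset (K := K) hx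
      have c1 := card_low (x := x) hε0 hεn hx
      have c2 := card_high (x := x) hε0 hε4 hεn hx
      have hcardN : ((univ : Finset (Fin n → Bool)).filter
            (fun y => Mfin K ε n x y ≠ Had K n x y)).card
          ≤ 2 * ((Tset ε n).card * (Tset ε n).card) := by
        have hu := Finset.card_le_card hsub
        have hv := Finset.card_union_le
          ((univ : Finset (Fin n → Bool)).filter
            (fun y => goodW ε n (wt y) ∧ ip x y < aP ε n))
          ((univ : Finset (Fin n → Bool)).filter
            (fun y => goodW ε n (wt y) ∧ aP ε n + DP ε n < ip x y))
        omega
      have hT := Tcard_bound ε n hε0 hε4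
      have hTpos : (0:ℝ) ≤ ((Tset ε n).card : ℝ) := Nat.cast_nonneg _
      have hcardR : (((univ : Finset (Fin n → Bool)).filter
            (fun y => Mfin K ε n x y ≠ Had K n x y)).card : ℝ)
          ≤ 2 * (((Tset ε n).card : ℝ) * ((Tset ε n).card : ℝ)) := by
        exact_mod_cast hcardN
      have e1 : ((Tset ε n).card : ℝ) * ((Tset ε n).card : ℝ)
          ≤ Real.exp (2*ε*(n:ℝ)*Real.log (1/ε)) * Real.exp (2*ε*(n:ℝ)*Real.log (1/ε)) :=
        mul_le_mul hT hT hTpos (Real.exp_pos _).le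
      rw [← Real.exp_add] at e1
      have hL : (8:ℝ) ≤ ε*(n:ℝ)*Real.log (1/ε) := by
        have h8 := mul_le_mul hεn hge1 zero_le_one
          (by positivity : (0:ℝ) ≤ ε * (n:ℝ))
        rw [mul_one] at h8
        linarith [h8]
      have e2 : (2:ℝ) * Real.exp (2*ε*(n:ℝ)*Real.log (1/ε) + 2*ε*(n:ℝ)*Real.log (1/ε))
          ≤ Real.exp (10*ε*(n:ℝ)*Real.log (1/ε)) := by
        have h28 : Real.log 2 + (2*ε*(n:ℝ)*Real.log (1/ε) + 2*ε*(n:ℝ)*Real.log (1/ε))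
            ≤ 10*ε*(n:ℝ)*Real.log (1/ε) := by linarith
        calc (2:ℝ) * Real.exp (2*ε*(n:ℝ)*Real.log (1/ε) + 2*ε*(n:ℝ)*Real.log (1/ε))
            = Real.exp (Real.log 2 + (2*ε*(n:ℝ)*Real.log (1/ε)
                + 2*ε*(n:ℝ)*Real.log (1/ε))) := by
              rw [Real.exp_add (Real.log 2), Real.exp_log (by norm_num : (0:ℝ) < 2)]
          _ ≤ _ := Real.exp_le_exp.2 h28
      linarith [hcardR, e1, e2]
    · have hempty : ((univ : Finset (Fin n → Bool)).filter
          (fun y => Mfin K ε n x y ≠ Had K n x y)) = ∅ := by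
        rw [Finset.filter_eq_empty_iff]
        intro y _
        exact not_not_intro (Mfin_eq_Had_of_bad (Or.inl hx))
      rw [hempty]
      simp only [Finset.card_empty, Nat.cast_zero]
      exact (Real.exp_pos _).le
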